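/- Let q : ℝ → ℝ be a C¹ function with |q'(x)| < 1 for all x, q(0) = 0 and q'(0) = 0, and let a ∈ ℝ. Define w(t, s) for t > 0 piecewise by: w = (a/2)·s for s ≤ −t; w = (a/2)·(T₊(s+t) − t) for −t ≤ s < q(t); w = (a/2)·(T₋(s−t) − t) for q(t) < s ≤ t; and w = −(a/2)·s for s ≥ t, where T₊ is the inverse of x ↦ q(x) + x and T₋ is the inverse of x ↦ q(x) − x. Then w is differentiable at every point (t, −t) with t > 0, with ∂ₛw = a/2 and ∂ₜw = 0 there, and w is differentiable at every point (t, t) with t > 0, with ∂ₛw = −a/2 and ∂ₜw = 0 there. -/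

import Mathlib

open Real

private lemma inv_continuous_of_strictMono {f g : ℝ → ℝ} (hf : StrictMono f)
    (hfg : ∀ y, f (g y) = y) : Continuous g := by
  have hsurj : Function.Surjective f := fun y => ⟨g y, hfg y⟩
  have hg : g = ⇑(StrictMono.orderIsoOfSurjective f hf hsurj).symm := by
    funext y
    apply (StrictMono.orderIsoOfSurjective f hf hsurj).injective
    simp [StrictMono.coe_orderIsoOfSurjective, hfg y]
  rw [hg]
  exact (StrictMono.orderIsoOfSurjective f hf hsurj).symm.continuous

/-- The singular part `w = U + Ψ` of the field is differentiable across the light cone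
`s = ±t` of the origin, with `∂ₛw = ±a/2` and `∂ₜw = 0` there: the singularities of `U`
and `Ψ` along the light cone cancel because the particle starts at rest. -/
theorem singular_field_C1_across_light_cone
    (q : ℝ → ℝ) (hq : ContDiff ℝ 1 q) (hq' : ∀ x, |deriv q x| < 1)
    (hq0 : q 0 = 0) (hq'0 : deriv q 0 = 0)
    (a : ℝ) (Tp Tm : ℝ → ℝ)
    (hTp : ∀ x, Tp (q x + x) = x) (hTp' : ∀ y, q (Tp y) + Tp y = y)
    (hTm : ∀ x, Tm (q x - x) = x) (hTm' : ∀ y, q (Tm y) - Tm y = y)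
    (w : ℝ × ℝ → ℝ)
    (hw : ∀ p : ℝ × ℝ, w p =
      if p.2 ≤ -p.1 then (a / 2) * p.2
      else if p.2 < q p.1 then (a / 2) * (Tp (p.2 + p.1) - p.1)
      else if p.2 ≤ p.1 then (a / 2) * (Tm (p.2 - p.1) - p.1)
      else -(a / 2) * p.2) :
    ∀ t : ℝ, 0 < t →
      HasFDerivAt w ((a / 2) • ContinuousLinearMap.snd ℝ ℝ ℝ) (t, -t) ∧
      HasFDerivAt w ((-(a / 2)) • ContinuousLinearMap.snd ℝ ℝ ℝ) (t, t) := by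
  have hqdiff : Differentiable ℝ q := hq.differentiable one_ne_zero
  have hqcont : Continuous q := hq.continuous
  -- |q t| < t for t > 0
  have hqlt : ∀ t : ℝ, 0 < t → |q t| < t := by
    intro t ht
    have hc : ContinuousOn (fun x => |deriv q x|) (Set.Icc 0 t) :=
      ((hq.continuous_deriv le_rfl).norm).continuousOn
    obtain ⟨x₀, hx₀, hmax⟩ := (isCompact_Icc).exists_isMaxOn
      (Set.nonempty_Icc.2 ht.le) hc
    have hM : |deriv q x₀| < 1 := hq' x₀
    have hb : |q t| ≤ |deriv q x₀| * t := by
      have := Convex.norm_image_sub_le_of_norm_deriv_le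
        (f := q) (s := Set.Icc 0 t) (x := (0:ℝ)) (y := t) (C := |deriv q x₀|)
        (fun x _ => hqdiff x) (fun x hx => hmax hx) (convex_Icc 0 t)
        (Set.left_mem_Icc.2 ht.le) (Set.right_mem_Icc.2 ht.le)
      simpa [hq0, Real.norm_eq_abs, abs_of_pos ht] using this
    calc |q t| ≤ |deriv q x₀| * t := hb
      _ < 1 * t := by
          apply mul_lt_mul_of_pos_right hM ht
      _ = t := one_mul t
  -- Tp 0 = 0, Tm 0 = 0
  have hTp0 : Tp 0 = 0 := by have := hTp 0; simpa [hq0] using this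
  have hTm0 : Tm 0 = 0 := by have := hTm 0; simpa [hq0] using this
  -- derivative of fun x => q x + x
  have hfP : ∀ x, HasDerivAt (fun x => q x + x) (deriv q x + 1) x := fun x =>
    ((hqdiff x).hasDerivAt).add (hasDerivAt_id x)
  have hfM : ∀ x, HasDerivAt (fun x => x - q x) (1 - deriv q x) x := fun x =>
    (hasDerivAt_id x).sub ((hqdiff x).hasDerivAt)
  have hmonoP : StrictMono (fun x => q x + x) := by
    apply strictMono_of_deriv_pos
    intro x
    rw [(hfP x).deriv]
    have := (abs_lt.1 (hq' x)).1
    linarith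
  have hmonoM : StrictMono (fun x => x - q x) := by
    apply strictMono_of_deriv_pos
    intro x
    rw [(hfM x).deriv]
    have := (abs_lt.1 (hq' x)).2
    linarith
  have hcontTp : Continuous Tp := inv_continuous_of_strictMono hmonoP hTp'
  have hcontTm : Continuous Tm := by
    have h1 : Continuous (fun y => Tm (-y)) := by
      apply inv_continuous_of_strictMono hmonoM
      intro y
      have := hTm' (-y)
      show Tm (-y) - q (Tm (-y)) = y
      linarith
    have h2 : Continuous ((fun y => Tm (-y)) ∘ (fun y : ℝ => -y)) :=
      h1.comp continuous_neg
    have h3 : Tm = ((fun y => Tm (-y)) ∘ (fun y : ℝ => -y)) := by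
      funext y
      simp [Function.comp]
    rw [h3]
    exact h2
  -- HasDerivAt Tp 1 0
  have hdTp : HasDerivAt Tp 1 0 := by
    have h := HasDerivAt.of_local_left_inverse (f := fun x => q x + x) (g := Tp)
      (f' := deriv q 0 + 1) (a := (0:ℝ)) hcontTp.continuousAt
      (by rw [hTp0]; exact hfP 0) (by rw [hq'0]; norm_num)
      (Filter.Eventually.of_forall hTp')
    simpa [hq'0] using h
  have hdTm : HasDerivAt Tm (-1) 0 := by
    have h := HasDerivAt.of_local_left_inverse (f := fun x => q x - x) (g := Tm)
      (f' := deriv q 0 - 1) (a := (0:ℝ)) hcontTm.continuousAt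
      (by rw [hTm0]
          exact ((hqdiff 0).hasDerivAt).sub (hasDerivAt_id 0))
      (by rw [hq'0]; norm_num)
      (Filter.Eventually.of_forall hTm')
    have hinv : ((deriv q 0 - 1))⁻¹ = -1 := by rw [hq'0]; norm_num
    rwa [hinv] at h
  -- little-o facts
  have hEp : (fun u : ℝ => Tp u - u) =o[nhds 0] fun u => u := by
    have := hasDerivAt_iff_isLittleO.1 hdTp
    simpa [hTp0] using this
  have hEm : (fun u : ℝ => Tm u + u) =o[nhds 0] fun u => u := by
    have := hasDerivAt_iff_isLittleO.1 hdTm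
    simpa [hTm0, sub_neg_eq_add, smul_eq_mul] using this
  intro t ht
  have hqt := hqlt t ht
  have hqt1 : -t < q t := (abs_lt.1 hqt).1
  have hqt2 : q t < t := (abs_lt.1 hqt).2
  constructor
  · -- at (t, -t)
    rw [hasFDerivAt_iff_isLittleO_nhds_zero]
    set L := (a / 2) • ContinuousLinearMap.snd ℝ ℝ ℝ with hL
    -- u h = h.1 + h.2
    have htend : Filter.Tendsto (fun h : ℝ × ℝ => h.1 + h.2) (nhds 0) (nhds 0) := by
      have : Continuous (fun h : ℝ × ℝ => h.1 + h.2) := continuous_fst.add continuous_snd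
      simpa using this.tendsto 0
    have hcomp : ((fun u : ℝ => Tp u - u) ∘ (fun h : ℝ × ℝ => h.1 + h.2))
        =o[nhds 0] ((fun u : ℝ => u) ∘ (fun h : ℝ × ℝ => h.1 + h.2)) :=
      hEp.comp_tendsto htend
    have hbigu : (fun h : ℝ × ℝ => h.1 + h.2) =O[nhds 0] fun h => h := by
      have := (ContinuousLinearMap.fst ℝ ℝ ℝ + ContinuousLinearMap.snd ℝ ℝ ℝ).isBigO_id
        (nhds (0 : ℝ × ℝ))
      simpa [Pi.add_def] using this
    have hg : (fun h : ℝ × ℝ => (a / 2) * (Tp (h.1 + h.2) - (h.1 + h.2)))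
        =o[nhds 0] fun h => h :=
      ((hcomp.trans_isBigO hbigu).const_mul_left (a / 2))
    -- eventual condition: -t + h.2 < q (t + h.1)
    have hev : ∀ᶠ h : ℝ × ℝ in nhds 0, -t + h.2 < q (t + h.1) := by
      apply ContinuousAt.eventually_lt
      · exact (continuous_const.add continuous_snd).continuousAt
      · exact (hqcont.comp (continuous_const.add continuous_fst)).continuousAt
      · simpa using hqt1
    apply Asymptotics.IsBigO.trans_isLittleO _ hg
    apply Asymptotics.IsBigO.of_bound 1
    filter_upwards [hev] with h hh
    have hwtt : w (t, -t) = (a / 2) * (-t) := by rw [hw]; simp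
    have hLh : L h = (a / 2) * h.2 := by simp [hL]
    rw [Prod.mk_add_mk, hw, hwtt, hLh]
    by_cases hc : -t + h.2 ≤ -(t + h.1)
    · simp only [hc, if_true]
      have : (a / 2) * (-t + h.2) - (a / 2) * (-t) - (a / 2) * h.2 = 0 := by ring
      rw [this, norm_zero, one_mul]
      exact norm_nonneg _
    · simp only [hc, if_false]
      rw [if_pos hh]
      have he : (-t + h.2) + (t + h.1) = h.1 + h.2 := by ring
      rw [he]
      have : (a / 2) * (Tp (h.1 + h.2) - (t + h.1)) - (a / 2) * (-t) - (a / 2) * h.2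
          = (a / 2) * (Tp (h.1 + h.2) - (h.1 + h.2)) := by ring
      rw [this, one_mul]
  · -- at (t, t)
    rw [hasFDerivAt_iff_isLittleO_nhds_zero]
    set L := (-(a / 2)) • ContinuousLinearMap.snd ℝ ℝ ℝ with hL
    have htend : Filter.Tendsto (fun h : ℝ × ℝ => h.2 - h.1) (nhds 0) (nhds 0) := by
      have : Continuous (fun h : ℝ × ℝ => h.2 - h.1) := continuous_snd.sub continuous_fst
      simpa using this.tendsto 0
    have hcomp : ((fun u : ℝ => Tm u + u) ∘ (fun h : ℝ × ℝ => h.2 - h.1))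
        =o[nhds 0] ((fun u : ℝ => u) ∘ (fun h : ℝ × ℝ => h.2 - h.1)) :=
      hEm.comp_tendsto htend
    have hbigu : (fun h : ℝ × ℝ => h.2 - h.1) =O[nhds 0] fun h => h := by
      have := (ContinuousLinearMap.snd ℝ ℝ ℝ - ContinuousLinearMap.fst ℝ ℝ ℝ).isBigO_id
        (nhds (0 : ℝ × ℝ))
      simpa [Pi.sub_def] using this
    have hg : (fun h : ℝ × ℝ => (a / 2) * (Tm (h.2 - h.1) + (h.2 - h.1)))
        =o[nhds 0] fun h => h :=
      ((hcomp.trans_isBigO hbigu).const_mul_left (a / 2))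
    -- eventual conditions
    have hev1 : ∀ᶠ h : ℝ × ℝ in nhds 0, ¬ (t + h.2 ≤ -(t + h.1)) := by
      have : ∀ᶠ h : ℝ × ℝ in nhds 0, -(t + h.1) < t + h.2 := by
        apply ContinuousAt.eventually_lt
        · exact (continuous_neg.comp (continuous_const.add continuous_fst)).continuousAt
        · exact (continuous_const.add continuous_snd).continuousAt
        · simpa using by linarith
      filter_upwards [this] with h hh
      exact not_le.2 hh
    have hev2 : ∀ᶠ h : ℝ × ℝ in nhds 0, ¬ (t + h.2 < q (t + h.1)) := by
      have : ∀ᶠ h : ℝ × ℝ in nhds 0, q (t + h.1) < t + h.2 := by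
        apply ContinuousAt.eventually_lt
        · exact (hqcont.comp (continuous_const.add continuous_fst)).continuousAt
        · exact (continuous_const.add continuous_snd).continuousAt
        · simpa using hqt2
      filter_upwards [this] with h hh
      exact not_lt.2 hh.le
    apply Asymptotics.IsBigO.trans_isLittleO _ hg
    apply Asymptotics.IsBigO.of_bound 1
    filter_upwards [hev1, hev2] with h hh1 hh2
    have hwtt : w (t, t) = (a / 2) * (-t) := by
      have h1 : ¬ ((t : ℝ) ≤ -t) := by linarith
      have h2 : ¬ ((t : ℝ) < q t) := not_lt.2 hqt2.le
      rw [hw]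
      simp only [h1, h2, if_false, le_refl, if_true, sub_self, hTm0, zero_sub]
    have hLh : L h = -(a / 2) * h.2 := by
      simp only [hL, ContinuousLinearMap.coe_smul', Pi.smul_apply,
        ContinuousLinearMap.coe_snd', smul_eq_mul]
    rw [Prod.mk_add_mk, hw, hwtt, hLh]
    simp only [if_neg hh1, if_neg hh2]
    by_cases hc : t + h.2 ≤ t + h.1
    · rw [if_pos hc]
      have he : (t + h.2) - (t + h.1) = h.2 - h.1 := by ring
      rw [he]
      have : (a / 2) * (Tm (h.2 - h.1) - (t + h.1)) - (a / 2) * (-t) - (-(a / 2)) * h.2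
          = (a / 2) * (Tm (h.2 - h.1) + (h.2 - h.1)) := by ring
      rw [this, one_mul]
    · rw [if_neg hc]
      have : -(a / 2) * (t + h.2) - (a / 2) * (-t) - (-(a / 2)) * h.2 = 0 := by ring
      rw [this, norm_zero, one_mul]
      exact norm_nonneg _
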